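/- Let A be a Banach algebra with a right identity e, and let d : A → A be a Jordan derivation. Then d(e·x) = d(e)·x + e·d(x) for all x ∈ A. -/
import Mathlib


/-- Let `A` be a complex Banach algebra with a right identity `e`, and let
`d : A → A` be a Jordan derivation.  Then `d (e * x) = d e * x + e * d x` for all `x ∈ A`. -/
theorem jordanDerivation_leibniz_on_rightIdentity
    {A : Type*} [NonUnitalNormedRing A] [NormedSpace ℂ A]
    [IsScalarTower ℂ A A] [SMulCommClass ℂ A A] [CompleteSpace A]
    (e : A) (he : ∀ a : A, a * e = a)
    (d : A →ₗ[ℂ] A) (hd : ∀ a : A, d (a * a) = d a * a + a * d a) :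
    ∀ x : A, d (e * x) = d e * x + e * d x := by
  -- halving lemma
  have halve : ∀ u v : A, u + u = v + v → u = v := by
    intro u v huv
    have h4 : (2 : ℂ) • u = (2 : ℂ) • v := by rw [two_smul, two_smul]; exact huv
    calc u = (2⁻¹ : ℂ) • ((2 : ℂ) • u) := by
            rw [smul_smul, show (2⁻¹ * 2 : ℂ) = 1 by norm_num, one_smul]
      _ = (2⁻¹ : ℂ) • ((2 : ℂ) • v) := by rw [h4]
      _ = v := by rw [smul_smul, show (2⁻¹ * 2 : ℂ) = 1 by norm_num, one_smul]
  -- polarized Jordan identity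
  have hpol : ∀ a b : A, d (a * b + b * a) = d a * b + a * d b + d b * a + b * d a := by
    intro a b
    have h := hd (a + b)
    rw [show (a + b) * (a + b) = a * a + (a * b + b * a) + b * b by
          simp only [mul_add, add_mul]; abel] at h
    rw [map_add d (a * a + (a * b + b * a)) (b * b), map_add d (a * a) (a * b + b * a),
        hd a, hd b, map_add d a b] at h
    rw [← sub_eq_zero] at h ⊢
    rw [← h]
    simp only [mul_add, add_mul]
    abel
  -- e is idempotent-ish facts
  have hee : e * e = e := he e
  have hep : e * d e = 0 := by
    have h := hd e
    rw [hee, he (d e)] at h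
    exact (left_eq_add.mp h)
  -- triple identity
  have htriple : ∀ a b : A, d (a * b * a) = d a * b * a + a * d b * a + a * b * d a := by
    intro a b
    have h1 := hpol a (a * b + b * a)
    rw [show a * (a * b + b * a) + (a * b + b * a) * a
          = (a * a * b + b * (a * a)) + (a * b * a + a * b * a) by
          simp only [mul_add, add_mul, mul_assoc]; abel] at h1
    rw [map_add d (a * a * b + b * (a * a)) (a * b * a + a * b * a),
        hpol (a * a) b, map_add d (a * b * a) (a * b * a), hpol a b, hd a] at h1
    apply halve
    rw [← sub_eq_zero] at h1 ⊢
    rw [← h1]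
    simp only [mul_add, add_mul, mul_assoc]
    abel
  -- key formula: d (e*y) = d e * y + e * d y + y * d e
  have hkey : ∀ y : A, d (e * y) = d e * y + e * d y + y * d e := by
    intro y
    have h := hpol e y
    rw [he y, map_add d (e * y) y, he (d y)] at h
    rw [← sub_eq_zero] at h ⊢
    rw [← h]; abel
  -- y * d e = e * y * d e
  have hxp_exp : ∀ y : A, y * d e = e * y * d e := by
    intro y
    have k2 := htriple e y
    rw [he (e * y), he (d e * y), he (e * d y)] at k2
    have h := (hkey y).symm.trans k2
    exact add_left_cancel h
  -- y * d e * y = 0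
  have hxpx : ∀ y : A, y * d e * y = 0 := by
    intro y
    have h := hd (e * y)
    rw [show (e * y) * (e * y) = e * (y * y) by
          rw [mul_assoc, ← mul_assoc y e y, he y]] at h
    rw [hkey (y * y), hkey y, hd y] at h
    simp only [mul_add, add_mul] at h
    rw [show d e * y * (e * y) = d e * y * y by rw [← mul_assoc, he (d e * y)],
        show e * d y * (e * y) = e * d y * y by rw [← mul_assoc, he (e * d y)],
        show y * d e * (e * y) = y * d e * y by rw [← mul_assoc, he (y * d e)],
        show e * y * (e * d y) = e * y * d y by rw [← mul_assoc, he (e * y)],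
        show e * y * (y * d e) = y * y * d e by
          rw [← mul_assoc, mul_assoc e y y, ← hxp_exp (y * y)],
        show e * y * (d e * y) = y * d e * y by
          rw [← mul_assoc, ← hxp_exp y]] at h
    have h2 : -(y * d e * y + y * d e * y) = 0 := by
      rw [← sub_eq_zero] at h
      rw [← h]
      simp only [mul_assoc]
      abel
    have h3 := neg_eq_zero.mp h2
    apply halve
    rw [add_zero]
    exact h3
  intro x
  -- x * d e = 0
  have hxp : x * d e = 0 := by
    have h := hxpx (x + e)
    rw [add_mul, hep, add_zero, mul_add, he (x * d e), hxpx x, zero_add] at h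
    exact h
  rw [hkey x, hxp, add_zero]
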